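/- Let A ∈ ℝ^{r'×N} and B ∈ ℝ^{N×r} be full-rank matrices with r ≤ r' ≤ N, and suppose AA^T is invertible. Let P_{A^T}(B) = A^T (A A^T)^{-1} A B denote the orthogonal projection of the columns of B onto the row space of A, and assume σ_min(P_{A^T}(B)) > 0. Then σ_min(AB) ≥ σ_min(A) · σ_min(P_{A^T}(B)). -/

import Mathlib

open scoped BigOperators
open MeasureTheory ProbabilityTheory Matrix

noncomputable def enorm2 {n : ℕ} (v : Fin n → ℝ) : ℝ :=
  ‖(WithLp.equiv 2 (Fin n → ℝ)).symm v‖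

noncomputable def sMax {m n : ℕ} (A : Matrix (Fin m) (Fin n) ℝ) : ℝ :=
  ⨆ x : {x : Fin n → ℝ // enorm2 x = 1}, enorm2 (A.mulVec x.1)

noncomputable def sMin {m n : ℕ} (A : Matrix (Fin m) (Fin n) ℝ) : ℝ :=
  ⨅ x : {x : Fin n → ℝ // enorm2 x = 1}, enorm2 (A.mulVec x.1)

lemma enorm2_nonneg {n : ℕ} (v : Fin n → ℝ) : 0 ≤ enorm2 v := norm_nonneg _

lemma enorm2_smul {n : ℕ} (c : ℝ) (v : Fin n → ℝ) : enorm2 (c • v) = |c| * enorm2 v := by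
  simp [enorm2, norm_smul, Real.norm_eq_abs]

lemma enorm2_eq_zero {n : ℕ} {v : Fin n → ℝ} : enorm2 v = 0 ↔ v = 0 := by
  rw [enorm2, norm_eq_zero]
  constructor
  · intro h; simpa using congrArg (WithLp.equiv 2 (Fin n → ℝ)) h
  · rintro rfl; simp

lemma enorm2_sq {n : ℕ} (v : Fin n → ℝ) : enorm2 v ^ 2 = v ⬝ᵥ v := by
  rw [enorm2, ← real_inner_self_eq_norm_sq]
  simp [PiLp.inner_apply, dotProduct, WithLp.equiv]
  rw [EuclideanSpace.norm_sq_eq]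
  refine Finset.sum_congr rfl fun i _ => ?_
  simp [Real.norm_eq_abs, sq, abs_mul_abs_self]

lemma dot_le {n : ℕ} (v w : Fin n → ℝ) : v ⬝ᵥ w ≤ enorm2 v * enorm2 w := by
  have := real_inner_le_norm ((WithLp.equiv 2 (Fin n → ℝ)).symm v)
    ((WithLp.equiv 2 (Fin n → ℝ)).symm w)
  simpa [PiLp.inner_apply, dotProduct, enorm2, WithLp.equiv, mul_comm] using this

lemma sMin_nonneg {m n : ℕ} (M : Matrix (Fin m) (Fin n) ℝ) : 0 ≤ sMin M :=
  Real.iInf_nonneg fun x => enorm2_nonneg _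

lemma sMin_bdd {m n : ℕ} (M : Matrix (Fin m) (Fin n) ℝ) :
    BddBelow (Set.range fun x : {x : Fin n → ℝ // enorm2 x = 1} => enorm2 (M.mulVec x.1)) := by
  refine ⟨0, ?_⟩
  rintro _ ⟨x, rfl⟩
  exact enorm2_nonneg _

lemma sMin_le {m n : ℕ} (M : Matrix (Fin m) (Fin n) ℝ) (x : Fin n → ℝ) (hx : enorm2 x = 1) :
    sMin M ≤ enorm2 (M.mulVec x) := ciInf_le (sMin_bdd M) ⟨x, hx⟩

lemma sMin_mul_le {m n : ℕ} (M : Matrix (Fin m) (Fin n) ℝ) (z : Fin n → ℝ) :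
    sMin M * enorm2 z ≤ enorm2 (M.mulVec z) := by
  rcases eq_or_ne z 0 with rfl | hz
  · simp [enorm2_eq_zero.2 rfl, Matrix.mulVec_zero, enorm2_eq_zero.2 (rfl : (0 : Fin m → ℝ) = 0)]
  · have hpos : 0 < enorm2 z := lt_of_le_of_ne (enorm2_nonneg z) (fun h => hz (enorm2_eq_zero.1 h.symm))
    have h1 : enorm2 ((enorm2 z)⁻¹ • z) = 1 := by
      rw [enorm2_smul, abs_of_pos (inv_pos.2 hpos), inv_mul_cancel₀ (ne_of_gt hpos)]
    have h2 := sMin_le M _ h1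
    rw [Matrix.mulVec_smul, enorm2_smul, abs_of_pos (inv_pos.2 hpos)] at h2
    have := mul_le_mul_of_nonneg_right h2 (le_of_lt hpos)
    calc sMin M * enorm2 z ≤ (enorm2 z)⁻¹ * enorm2 (M.mulVec z) * enorm2 z := this
      _ = enorm2 (M.mulVec z) := by field_simp

lemma key {m n : ℕ} (A : Matrix (Fin m) (Fin n) ℝ) (z : Fin m → ℝ) :
    sMin Aᵀ * enorm2 (Aᵀ.mulVec z) ≤ enorm2 (A.mulVec (Aᵀ.mulVec z)) := by
  set u := Aᵀ.mulVec z with hu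
  rcases eq_or_ne (enorm2 u) 0 with h0 | h0
  · rw [h0, mul_zero]; exact enorm2_nonneg _
  · have hupos : 0 < enorm2 u := lt_of_le_of_ne (enorm2_nonneg u) (Ne.symm h0)
    have hlow : sMin Aᵀ * enorm2 z ≤ enorm2 u := sMin_mul_le Aᵀ z
    have hdot : u ⬝ᵥ u = z ⬝ᵥ A.mulVec u := by
      conv_rhs => rw [Matrix.dotProduct_mulVec]
      rw [hu, Matrix.mulVec_transpose]
    have hCS : enorm2 u ^ 2 ≤ enorm2 z * enorm2 (A.mulVec u) := by
      rw [enorm2_sq, hdot]; exact dot_le _ _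
    have hσ : 0 ≤ sMin Aᵀ := sMin_nonneg _
    refine le_of_mul_le_mul_right ?_ hupos
    nlinarith [mul_le_mul_of_nonneg_right hlow (enorm2_nonneg (A.mulVec u)),
      mul_le_mul_of_nonneg_left hCS hσ]

theorem stmt_2 {r r' N : ℕ} (hr : r ≤ r') (hr' : r' ≤ N)
    (A : Matrix (Fin r') (Fin N) ℝ) (B : Matrix (Fin N) (Fin r) ℝ)
    (hArank : A.rank = r') (hBrank : B.rank = r)
    (hInv : IsUnit (A * Aᵀ).det)
    (hP : 0 < sMin (Aᵀ * (A * Aᵀ)⁻¹ * A * B)) :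
    sMin Aᵀ * sMin (Aᵀ * (A * Aᵀ)⁻¹ * A * B) ≤ sMin (A * B) := by
  
  have hA1 : A * Aᵀ * (A * Aᵀ)⁻¹ = 1 := Matrix.mul_nonsing_inv _ hInv
  set P : Matrix (Fin N) (Fin r) ℝ := Aᵀ * (A * Aᵀ)⁻¹ * A * B with hPdef
  have hM : A * P = A * B := by
    rw [hPdef, ← Matrix.mul_assoc, ← Matrix.mul_assoc, ← Matrix.mul_assoc, hA1, Matrix.one_mul]
  have hPfac : P = Aᵀ * ((A * Aᵀ)⁻¹ * A * B) := by
    rw [hPdef]; simp only [Matrix.mul_assoc]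
  have hne : Nonempty {x : Fin r → ℝ // enorm2 x = 1} := by
    by_contra h
    rw [not_nonempty_iff] at h
    rw [sMin, iInf_of_isEmpty, Real.sInf_empty] at hP
    exact lt_irrefl 0 hP
  rw [← hM, sMin]
  refine le_ciInf fun x => ?_
  have h1 : sMin P ≤ enorm2 (P.mulVec x.1) := sMin_le P x.1 x.2
  calc sMin Aᵀ * sMin P ≤ sMin Aᵀ * enorm2 (P.mulVec x.1) :=
        mul_le_mul_of_nonneg_left h1 (sMin_nonneg _)
    _ ≤ enorm2 (A.mulVec (P.mulVec x.1)) := by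
        rw [hPfac, ← Matrix.mulVec_mulVec]
        exact key A _
    _ = enorm2 ((A * P).mulVec x.1) := by rw [Matrix.mulVec_mulVec]
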